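/- A Frobenius monoidal functor F : D ⥤ C sends Frobenius algebras in D to Frobenius algebras in C: if (X, m, u, Δ, ε) is a Frobenius algebra in D, then F(X) is a Frobenius algebra in C with multiplication F(m) ∘ lax_{X,X}, unit F(u) ∘ lax₀, comultiplication oplax_{X,X} ∘ F(Δ), and counit oplax₀ ∘ F(ε). -/

import Mathlib

open CategoryTheory MonoidalCategory

universe v₁ v₂ v₃ u₁ u₂ u₃

/-- The data of a functor equipped with both a lax and an oplax monoidal structure. -/
structure FrobData (D : Type u₁) [Category.{v₁} D] [MonoidalCategory D]
    (C : Type u₂) [Category.{v₂} C] [MonoidalCategory C] where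
  F : D ⥤ C
  lax : ∀ X Y : D, F.obj X ⊗ F.obj Y ⟶ F.obj (X ⊗ Y)
  lax₀ : 𝟙_ C ⟶ F.obj (𝟙_ D)
  oplax : ∀ X Y : D, F.obj (X ⊗ Y) ⟶ F.obj X ⊗ F.obj Y
  oplax₀ : F.obj (𝟙_ D) ⟶ 𝟙_ C

variable {D : Type u₁} [Category.{v₁} D] [MonoidalCategory D]
variable {C : Type u₂} [Category.{v₂} C] [MonoidalCategory C]

/-- The axioms of a lax monoidal structure. -/
def FrobData.IsLax (d : FrobData D C) : Prop :=
  (∀ {X Y X' Y' : D} (f : X ⟶ X') (g : Y ⟶ Y'),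
    (d.F.map f ⊗ₘ d.F.map g) ≫ d.lax X' Y' = d.lax X Y ≫ d.F.map (f ⊗ₘ g)) ∧
  (∀ X Y Z : D,
    (d.lax X Y ▷ d.F.obj Z) ≫ d.lax (X ⊗ Y) Z ≫ d.F.map (α_ X Y Z).hom =
      (α_ (d.F.obj X) (d.F.obj Y) (d.F.obj Z)).hom ≫ (d.F.obj X ◁ d.lax Y Z) ≫
        d.lax X (Y ⊗ Z)) ∧
  (∀ X : D,
    (d.lax₀ ▷ d.F.obj X) ≫ d.lax (𝟙_ D) X ≫ d.F.map (λ_ X).hom = (λ_ (d.F.obj X)).hom) ∧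
  (∀ X : D,
    (d.F.obj X ◁ d.lax₀) ≫ d.lax X (𝟙_ D) ≫ d.F.map (ρ_ X).hom = (ρ_ (d.F.obj X)).hom)

/-- The axioms of an oplax monoidal structure. -/
def FrobData.IsOplax (d : FrobData D C) : Prop :=
  (∀ {X Y X' Y' : D} (f : X ⟶ X') (g : Y ⟶ Y'),
    d.F.map (f ⊗ₘ g) ≫ d.oplax X' Y' = d.oplax X Y ≫ (d.F.map f ⊗ₘ d.F.map g)) ∧
  (∀ X Y Z : D,
    d.oplax (X ⊗ Y) Z ≫ (d.oplax X Y ▷ d.F.obj Z) ≫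
        (α_ (d.F.obj X) (d.F.obj Y) (d.F.obj Z)).hom =
      d.F.map (α_ X Y Z).hom ≫ d.oplax X (Y ⊗ Z) ≫ (d.F.obj X ◁ d.oplax Y Z)) ∧
  (∀ X : D,
    d.oplax (𝟙_ D) X ≫ (d.oplax₀ ▷ d.F.obj X) ≫ (λ_ (d.F.obj X)).hom = d.F.map (λ_ X).hom) ∧
  (∀ X : D,
    d.oplax X (𝟙_ D) ≫ (d.F.obj X ◁ d.oplax₀) ≫ (ρ_ (d.F.obj X)).hom = d.F.map (ρ_ X).hom)

/-- The two Frobenius compatibility conditions. -/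
def FrobData.IsFrobenius (d : FrobData D C) : Prop :=
  (∀ X Y Z : D,
    (d.F.obj X ◁ d.oplax Y Z) ≫ (α_ (d.F.obj X) (d.F.obj Y) (d.F.obj Z)).inv ≫
        (d.lax X Y ▷ d.F.obj Z) =
      d.lax X (Y ⊗ Z) ≫ d.F.map (α_ X Y Z).inv ≫ d.oplax (X ⊗ Y) Z) ∧
  (∀ X Y Z : D,
    (d.oplax X Y ▷ d.F.obj Z) ≫ (α_ (d.F.obj X) (d.F.obj Y) (d.F.obj Z)).hom ≫
        (d.F.obj X ◁ d.lax Y Z) =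
      d.lax (X ⊗ Y) Z ≫ d.F.map (α_ X Y Z).hom ≫ d.oplax X (Y ⊗ Z))
/-- The data of an object with both an algebra and a coalgebra structure. -/
structure AlgCoalgData (C : Type u₂) [Category.{v₂} C] [MonoidalCategory C] where
  X : C
  mul : X ⊗ X ⟶ X
  one : 𝟙_ C ⟶ X
  comul : X ⟶ X ⊗ X
  counit : X ⟶ 𝟙_ C

/-- The axioms of a Frobenius algebra: associativity, unitality, coassociativity,
counitality and the two Frobenius compatibility conditions. -/
def AlgCoalgData.IsFrobeniusAlgebra (a : AlgCoalgData C) : Prop :=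
  ((a.mul ▷ a.X) ≫ a.mul = (α_ a.X a.X a.X).hom ≫ (a.X ◁ a.mul) ≫ a.mul) ∧
  ((a.one ▷ a.X) ≫ a.mul = (λ_ a.X).hom) ∧
  ((a.X ◁ a.one) ≫ a.mul = (ρ_ a.X).hom) ∧
  (a.comul ≫ (a.comul ▷ a.X) ≫ (α_ a.X a.X a.X).hom = a.comul ≫ (a.X ◁ a.comul)) ∧
  (a.comul ≫ (a.counit ▷ a.X) ≫ (λ_ a.X).hom = 𝟙 a.X) ∧
  (a.comul ≫ (a.X ◁ a.counit) ≫ (ρ_ a.X).hom = 𝟙 a.X) ∧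
  (a.mul ≫ a.comul = (a.X ◁ a.comul) ≫ (α_ a.X a.X a.X).inv ≫ (a.mul ▷ a.X)) ∧
  (a.mul ≫ a.comul = (a.comul ▷ a.X) ≫ (α_ a.X a.X a.X).hom ≫ (a.X ◁ a.mul))

/-- a Frobenius monoidal functor sends Frobenius algebras to Frobenius algebras. -/
theorem frobenius_monoidal_functor_preserves_frobenius_algebras
    (d : FrobData D C) (hl : d.IsLax) (ho : d.IsOplax) (hf : d.IsFrobenius)
    (a : AlgCoalgData D) (ha : a.IsFrobeniusAlgebra) :
    AlgCoalgData.IsFrobeniusAlgebra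
      { X := d.F.obj a.X
        mul := d.lax a.X a.X ≫ d.F.map a.mul
        one := d.lax₀ ≫ d.F.map a.one
        comul := d.F.map a.comul ≫ d.oplax a.X a.X
        counit := d.F.map a.counit ≫ d.oplax₀ } := by
  obtain ⟨lnat, lassoc, lleft, lright⟩ := hl
  obtain ⟨onat, oassoc, oleft, oright⟩ := ho
  obtain ⟨f1, f2⟩ := hf
  obtain ⟨hassoc, hol, hor, hco, hcl, hcr, hfa1, hfa2⟩ := ha
  have lnatR : ∀ {X X' : D} (f : X ⟶ X') (Y : D),
      (d.F.map f ▷ d.F.obj Y) ≫ d.lax X' Y = d.lax X Y ≫ d.F.map (f ▷ Y) := by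
    intro X X' f Y
    simpa [tensorHom_id, id_tensorHom] using lnat f (𝟙 Y)
  have lnatL : ∀ (X : D) {Y Y' : D} (g : Y ⟶ Y'),
      (d.F.obj X ◁ d.F.map g) ≫ d.lax X Y' = d.lax X Y ≫ d.F.map (X ◁ g) := by
    intro X Y Y' g
    simpa [tensorHom_id, id_tensorHom] using lnat (𝟙 X) g
  have onatR : ∀ {X X' : D} (f : X ⟶ X') (Y : D),
      d.F.map (f ▷ Y) ≫ d.oplax X' Y = d.oplax X Y ≫ (d.F.map f ▷ d.F.obj Y) := by
    intro X X' f Y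
    simpa [tensorHom_id, id_tensorHom] using onat f (𝟙 Y)
  have onatL : ∀ (X : D) {Y Y' : D} (g : Y ⟶ Y'),
      d.F.map (X ◁ g) ≫ d.oplax X Y' = d.oplax X Y ≫ (d.F.obj X ◁ d.F.map g) := by
    intro X Y Y' g
    simpa [tensorHom_id, id_tensorHom] using onat (𝟙 X) g
  refine ⟨?_, ?_, ?_, ?_, ?_, ?_, ?_, ?_⟩
  · -- associativity
    dsimp only
    calc ((d.lax a.X a.X ≫ d.F.map a.mul) ▷ d.F.obj a.X) ≫ d.lax a.X a.X ≫ d.F.map a.mul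
        = (d.lax a.X a.X ▷ d.F.obj a.X) ≫ ((d.F.map a.mul ▷ d.F.obj a.X) ≫ d.lax _ a.X) ≫
            d.F.map a.mul := by simp
      _ = (d.lax a.X a.X ▷ d.F.obj a.X) ≫ d.lax _ a.X ≫ d.F.map ((a.mul ▷ a.X) ≫ a.mul) := by
            rw [lnatR]; simp
      _ = (d.lax a.X a.X ▷ d.F.obj a.X) ≫ d.lax _ a.X ≫
            d.F.map ((α_ a.X a.X a.X).hom ≫ (a.X ◁ a.mul) ≫ a.mul) := by rw [hassoc]
      _ = ((d.lax a.X a.X ▷ d.F.obj a.X) ≫ d.lax _ a.X ≫ d.F.map (α_ a.X a.X a.X).hom) ≫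
            d.F.map ((a.X ◁ a.mul) ≫ a.mul) := by simp
      _ = (α_ _ _ _).hom ≫ (d.F.obj a.X ◁ d.lax a.X a.X) ≫ d.lax a.X _ ≫
            d.F.map (a.X ◁ a.mul) ≫ d.F.map a.mul := by rw [lassoc]; simp
      _ = (α_ _ _ _).hom ≫ (d.F.obj a.X ◁ d.lax a.X a.X) ≫
            ((d.F.obj a.X ◁ d.F.map a.mul) ≫ d.lax a.X a.X) ≫ d.F.map a.mul := by
            rw [lnatL]; simp
      _ = _ := by simp
  · -- left unit
    dsimp only
    calc ((d.lax₀ ≫ d.F.map a.one) ▷ d.F.obj a.X) ≫ d.lax a.X a.X ≫ d.F.map a.mul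
        = (d.lax₀ ▷ d.F.obj a.X) ≫ ((d.F.map a.one ▷ d.F.obj a.X) ≫ d.lax a.X a.X) ≫
            d.F.map a.mul := by simp
      _ = (d.lax₀ ▷ d.F.obj a.X) ≫ d.lax (𝟙_ D) a.X ≫ d.F.map ((a.one ▷ a.X) ≫ a.mul) := by
            rw [lnatR]; simp
      _ = (d.lax₀ ▷ d.F.obj a.X) ≫ d.lax (𝟙_ D) a.X ≫ d.F.map (λ_ a.X).hom := by rw [hol]
      _ = _ := lleft a.X
  · -- right unit
    dsimp only
    calc (d.F.obj a.X ◁ (d.lax₀ ≫ d.F.map a.one)) ≫ d.lax a.X a.X ≫ d.F.map a.mul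
        = (d.F.obj a.X ◁ d.lax₀) ≫ ((d.F.obj a.X ◁ d.F.map a.one) ≫ d.lax a.X a.X) ≫
            d.F.map a.mul := by simp
      _ = (d.F.obj a.X ◁ d.lax₀) ≫ d.lax a.X (𝟙_ D) ≫ d.F.map ((a.X ◁ a.one) ≫ a.mul) := by
            rw [lnatL]; simp
      _ = (d.F.obj a.X ◁ d.lax₀) ≫ d.lax a.X (𝟙_ D) ≫ d.F.map (ρ_ a.X).hom := by rw [hor]
      _ = _ := lright a.X
  · -- coassociativity
    dsimp only
    calc (d.F.map a.comul ≫ d.oplax a.X a.X) ≫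
            (((d.F.map a.comul ≫ d.oplax a.X a.X)) ▷ d.F.obj a.X) ≫ (α_ _ _ _).hom
        = d.F.map a.comul ≫ (d.oplax a.X a.X ≫ (d.F.map a.comul ▷ d.F.obj a.X)) ≫
            (d.oplax a.X a.X ▷ d.F.obj a.X) ≫ (α_ _ _ _).hom := by simp
      _ = d.F.map a.comul ≫ d.F.map (a.comul ▷ a.X) ≫ d.oplax _ a.X ≫
            (d.oplax a.X a.X ▷ d.F.obj a.X) ≫ (α_ _ _ _).hom := by rw [← onatR]; simp
      _ = d.F.map a.comul ≫ d.F.map (a.comul ▷ a.X) ≫ d.F.map (α_ a.X a.X a.X).hom ≫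
            d.oplax a.X _ ≫ (d.F.obj a.X ◁ d.oplax a.X a.X) := by rw [oassoc]
      _ = d.F.map (a.comul ≫ (a.comul ▷ a.X) ≫ (α_ a.X a.X a.X).hom) ≫
            d.oplax a.X _ ≫ (d.F.obj a.X ◁ d.oplax a.X a.X) := by simp
      _ = d.F.map (a.comul ≫ (a.X ◁ a.comul)) ≫
            d.oplax a.X _ ≫ (d.F.obj a.X ◁ d.oplax a.X a.X) := by rw [hco]
      _ = d.F.map a.comul ≫ (d.F.map (a.X ◁ a.comul) ≫ d.oplax a.X _) ≫
            (d.F.obj a.X ◁ d.oplax a.X a.X) := by simp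
      _ = _ := by rw [onatL]; simp
  · -- left counit
    dsimp only
    calc (d.F.map a.comul ≫ d.oplax a.X a.X) ≫
            ((d.F.map a.counit ≫ d.oplax₀) ▷ d.F.obj a.X) ≫ (λ_ _).hom
        = d.F.map a.comul ≫ (d.oplax a.X a.X ≫ (d.F.map a.counit ▷ d.F.obj a.X)) ≫
            (d.oplax₀ ▷ d.F.obj a.X) ≫ (λ_ _).hom := by simp
      _ = d.F.map a.comul ≫ d.F.map (a.counit ▷ a.X) ≫ d.oplax (𝟙_ D) a.X ≫
            (d.oplax₀ ▷ d.F.obj a.X) ≫ (λ_ _).hom := by rw [← onatR]; simp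
      _ = d.F.map a.comul ≫ d.F.map (a.counit ▷ a.X) ≫ d.F.map (λ_ a.X).hom := by
            rw [oleft]
      _ = d.F.map (a.comul ≫ (a.counit ▷ a.X) ≫ (λ_ a.X).hom) := by simp
      _ = _ := by rw [hcl]; simp
  · -- right counit
    dsimp only
    calc (d.F.map a.comul ≫ d.oplax a.X a.X) ≫
            (d.F.obj a.X ◁ (d.F.map a.counit ≫ d.oplax₀)) ≫ (ρ_ _).hom
        = d.F.map a.comul ≫ (d.oplax a.X a.X ≫ (d.F.obj a.X ◁ d.F.map a.counit)) ≫
            (d.F.obj a.X ◁ d.oplax₀) ≫ (ρ_ _).hom := by simp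
      _ = d.F.map a.comul ≫ d.F.map (a.X ◁ a.counit) ≫ d.oplax a.X (𝟙_ D) ≫
            (d.F.obj a.X ◁ d.oplax₀) ≫ (ρ_ _).hom := by rw [← onatL]; simp
      _ = d.F.map a.comul ≫ d.F.map (a.X ◁ a.counit) ≫ d.F.map (ρ_ a.X).hom := by
            rw [oright]
      _ = d.F.map (a.comul ≫ (a.X ◁ a.counit) ≫ (ρ_ a.X).hom) := by simp
      _ = _ := by rw [hcr]; simp
  · -- Frobenius 1
    dsimp only
    calc (d.lax a.X a.X ≫ d.F.map a.mul) ≫ d.F.map a.comul ≫ d.oplax a.X a.X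
        = d.lax a.X a.X ≫ d.F.map (a.mul ≫ a.comul) ≫ d.oplax a.X a.X := by simp
      _ = d.lax a.X a.X ≫
            d.F.map ((a.X ◁ a.comul) ≫ (α_ a.X a.X a.X).inv ≫ (a.mul ▷ a.X)) ≫
            d.oplax a.X a.X := by rw [hfa1]
      _ = ((d.F.obj a.X ◁ d.F.map a.comul) ≫ d.lax a.X (a.X ⊗ a.X)) ≫
            d.F.map (α_ a.X a.X a.X).inv ≫ d.F.map (a.mul ▷ a.X) ≫ d.oplax a.X a.X := by
            rw [lnatL]; simp
      _ = (d.F.obj a.X ◁ d.F.map a.comul) ≫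
            (d.lax a.X (a.X ⊗ a.X) ≫ d.F.map (α_ a.X a.X a.X).inv ≫ d.oplax (a.X ⊗ a.X) a.X) ≫
            (d.F.map a.mul ▷ d.F.obj a.X) := by rw [onatR]; simp
      _ = (d.F.obj a.X ◁ d.F.map a.comul) ≫
            ((d.F.obj a.X ◁ d.oplax a.X a.X) ≫ (α_ _ _ _).inv ≫
              (d.lax a.X a.X ▷ d.F.obj a.X)) ≫ (d.F.map a.mul ▷ d.F.obj a.X) := by
            rw [f1]
      _ = _ := by simp
  · -- Frobenius 2
    dsimp only
    calc (d.lax a.X a.X ≫ d.F.map a.mul) ≫ d.F.map a.comul ≫ d.oplax a.X a.X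
        = d.lax a.X a.X ≫ d.F.map (a.mul ≫ a.comul) ≫ d.oplax a.X a.X := by simp
      _ = d.lax a.X a.X ≫
            d.F.map ((a.comul ▷ a.X) ≫ (α_ a.X a.X a.X).hom ≫ (a.X ◁ a.mul)) ≫
            d.oplax a.X a.X := by rw [hfa2]
      _ = ((d.F.map a.comul ▷ d.F.obj a.X) ≫ d.lax (a.X ⊗ a.X) a.X) ≫
            d.F.map (α_ a.X a.X a.X).hom ≫ d.F.map (a.X ◁ a.mul) ≫ d.oplax a.X a.X := by
            rw [lnatR]; simp
      _ = (d.F.map a.comul ▷ d.F.obj a.X) ≫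
            (d.lax (a.X ⊗ a.X) a.X ≫ d.F.map (α_ a.X a.X a.X).hom ≫ d.oplax a.X (a.X ⊗ a.X)) ≫
            (d.F.obj a.X ◁ d.F.map a.mul) := by rw [onatL]; simp
      _ = (d.F.map a.comul ▷ d.F.obj a.X) ≫
            ((d.oplax a.X a.X ▷ d.F.obj a.X) ≫ (α_ _ _ _).hom ≫
              (d.F.obj a.X ◁ d.lax a.X a.X)) ≫ (d.F.obj a.X ◁ d.F.map a.mul) := by
            rw [f2]
      _ = _ := by simp
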